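/- Inconsistency of the self-training loss: for the squared loss ℓ_θ(x, y) = (θ − y)², the expected gradient of the self-training loss at the population minimizer θ* = E[Y_1] equals E[d/dθ L^SL(θ*)] = (2m/(m+n))·(E[Y_1] − E[f̂(X_1)]); in particular, its absolute value is at least |E[Y_1] − E[f̂(X_1)]| whenever m ≥ n, so θ* fails to be a critical point of the expected self-training loss whenever E[f̂(X_1)] ≠ E[Y_1]. -/

import Mathlib

open MeasureTheory ProbabilityTheory Finset

/-- Inconsistency of the self-training loss: for the squared loss, the expected gradient of
the self-training loss at the population minimizer `θ* = E[Y₁]` equals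
`(2m/(m+n))·(E[Y₁] − E[f̂(X₁)])`; its absolute value is at least `|E[Y₁] − E[f̂(X₁)]|`
whenever `m ≥ n`, so `θ*` fails to be a critical point of the expected self-training loss
whenever `E[f̂(X₁)] ≠ E[Y₁]`. -/
theorem self_training_loss_gradient_inconsistent
    {Ω : Type*} [MeasurableSpace Ω] (μ : Measure Ω) [IsProbabilityMeasure μ]
    {𝒳 : Type*} [MeasurableSpace 𝒳]
    (m n : ℕ) (hm : 0 < m) (hn : 0 < n)
    (X : Fin (m + n) → Ω → 𝒳) (Y : Fin (m + n) → Ω → ℝ)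
    (hXmeas : ∀ i, Measurable (X i)) (hYmeas : ∀ i, Measurable (Y i))
    (h_indep : iIndepFun (m := fun _ => (inferInstance : MeasurableSpace (𝒳 × ℝ)))
      (fun i ω => (X i ω, Y i ω)) μ)
    (h_ident : ∀ i : Fin (m + n),
      IdentDistrib (fun ω => (X i ω, Y i ω))
        (fun ω => (X ⟨0, by omega⟩ ω, Y ⟨0, by omega⟩ ω)) μ μ)
    (f : 𝒳 → ℝ) (hf : Measurable f)
    (hY2 : MemLp (Y ⟨0, by omega⟩) 2 μ)
    (hfX2 : MemLp (fun ω => f (X ⟨0, by omega⟩ ω)) 2 μ) :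
    (∫ ω, ((2 / (m + n : ℝ)) *
          ((∑ i ∈ Finset.univ.filter (fun i : Fin (m + n) => (i : ℕ) < m),
              ((∫ ω', Y ⟨0, by omega⟩ ω' ∂μ) - f (X i ω)))
            + ∑ i ∈ Finset.univ.filter (fun i : Fin (m + n) => m ≤ (i : ℕ)),
              ((∫ ω', Y ⟨0, by omega⟩ ω' ∂μ) - Y i ω))) ∂μ)
      = (2 * (m : ℝ) / (m + n : ℝ)) *
          ((∫ ω, Y ⟨0, by omega⟩ ω ∂μ) - ∫ ω, f (X ⟨0, by omega⟩ ω) ∂μ) ∧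
    (n ≤ m →
      |(∫ ω, Y ⟨0, by omega⟩ ω ∂μ) - ∫ ω, f (X ⟨0, by omega⟩ ω) ∂μ|
        ≤ |∫ ω, ((2 / (m + n : ℝ)) *
            ((∑ i ∈ Finset.univ.filter (fun i : Fin (m + n) => (i : ℕ) < m),
                ((∫ ω', Y ⟨0, by omega⟩ ω' ∂μ) - f (X i ω)))
              + ∑ i ∈ Finset.univ.filter (fun i : Fin (m + n) => m ≤ (i : ℕ)),
                ((∫ ω', Y ⟨0, by omega⟩ ω' ∂μ) - Y i ω))) ∂μ|) ∧
    ((∫ ω, f (X ⟨0, by omega⟩ ω) ∂μ) ≠ (∫ ω, Y ⟨0, by omega⟩ ω ∂μ) →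
      (∫ ω, ((2 / (m + n : ℝ)) *
          ((∑ i ∈ Finset.univ.filter (fun i : Fin (m + n) => (i : ℕ) < m),
              ((∫ ω', Y ⟨0, by omega⟩ ω' ∂μ) - f (X i ω)))
            + ∑ i ∈ Finset.univ.filter (fun i : Fin (m + n) => m ≤ (i : ℕ)),
              ((∫ ω', Y ⟨0, by omega⟩ ω' ∂μ) - Y i ω))) ∂μ) ≠ 0) := by
  have hmn : (0 : ℝ) < (m : ℝ) + n := by positivity
  have hYint : Integrable (Y ⟨0, by omega⟩) μ := hY2.integrable one_le_two
  have hfint : Integrable (fun ω => f (X ⟨0, by omega⟩ ω)) μ := hfX2.integrable one_le_two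
  have hidf : ∀ i : Fin (m + n),
      IdentDistrib (fun ω => f (X i ω)) (fun ω => f (X ⟨0, by omega⟩ ω)) μ μ :=
    fun i => (h_ident i).comp (hf.comp measurable_fst)
  have hidY : ∀ i : Fin (m + n), IdentDistrib (Y i) (Y ⟨0, by omega⟩) μ μ :=
    fun i => (h_ident i).comp measurable_snd
  have hfiint : ∀ i, Integrable (fun ω => f (X i ω)) μ :=
    fun i => (hidf i).integrable_iff.mpr hfint
  have hYiint : ∀ i, Integrable (Y i) μ := fun i => (hidY i).integrable_iff.mpr hYint
  set θ : ℝ := ∫ ω', Y ⟨0, by omega⟩ ω' ∂μ with hθ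
  set Ef : ℝ := ∫ ω, f (X ⟨0, by omega⟩ ω) ∂μ with hEf
  have hcard1 : (Finset.univ.filter (fun i : Fin (m + n) => (i : ℕ) < m)).card = m := by
    have h : (Finset.univ.filter (fun i : Fin (m + n) => (i : ℕ) < m))
        = (Finset.range m).attachFin
            (fun x hx => lt_of_lt_of_le (Finset.mem_range.mp hx) (Nat.le_add_right m n)) := by
      ext i; simp [Finset.mem_attachFin, Finset.mem_range]
    rw [h, Finset.card_attachFin, Finset.card_range]
  have hcard2 : (Finset.univ.filter (fun i : Fin (m + n) => m ≤ (i : ℕ))).card = n := by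
    have h : (Finset.univ.filter (fun i : Fin (m + n) => m ≤ (i : ℕ)))
        = (Finset.Ico m (m + n)).attachFin
            (fun x hx => (Finset.mem_Ico.mp hx).2) := by
      ext i; simp [Finset.mem_attachFin, Finset.mem_Ico]
    rw [h, Finset.card_attachFin, Nat.card_Ico]; omega
  have hS1int : Integrable (fun ω =>
      ∑ i ∈ Finset.univ.filter (fun i : Fin (m + n) => (i : ℕ) < m), (θ - f (X i ω))) μ :=
    integrable_finset_sum _ (fun i _ => (integrable_const θ).sub (hfiint i))
  have hS2int : Integrable (fun ω =>
      ∑ i ∈ Finset.univ.filter (fun i : Fin (m + n) => m ≤ (i : ℕ)), (θ - Y i ω)) μ :=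
    integrable_finset_sum _ (fun i _ => (integrable_const θ).sub (hYiint i))
  have key : (∫ ω, ((2 / (m + n : ℝ)) *
          ((∑ i ∈ Finset.univ.filter (fun i : Fin (m + n) => (i : ℕ) < m), (θ - f (X i ω)))
            + ∑ i ∈ Finset.univ.filter (fun i : Fin (m + n) => m ≤ (i : ℕ)), (θ - Y i ω))) ∂μ)
      = (2 * (m : ℝ) / (m + n : ℝ)) * (θ - Ef) := by
    have i1 : (∫ ω, (∑ i ∈ Finset.univ.filter (fun i : Fin (m + n) => (i : ℕ) < m),
          (θ - f (X i ω))) ∂μ)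
        = ∑ i ∈ Finset.univ.filter (fun i : Fin (m + n) => (i : ℕ) < m),
            ∫ ω, (θ - f (X i ω)) ∂μ :=
      integral_finset_sum _ (fun i _ => (integrable_const θ).sub (hfiint i))
    have i2 : (∫ ω, (∑ i ∈ Finset.univ.filter (fun i : Fin (m + n) => m ≤ (i : ℕ)),
          (θ - Y i ω)) ∂μ)
        = ∑ i ∈ Finset.univ.filter (fun i : Fin (m + n) => m ≤ (i : ℕ)),
            ∫ ω, (θ - Y i ω) ∂μ :=
      integral_finset_sum _ (fun i _ => (integrable_const θ).sub (hYiint i))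
    rw [integral_const_mul, integral_add hS1int hS2int, i1, i2]
    have e1 : ∀ i ∈ Finset.univ.filter (fun i : Fin (m + n) => (i : ℕ) < m),
        (∫ ω, (θ - f (X i ω)) ∂μ) = θ - Ef := by
      intro i _
      rw [integral_sub (integrable_const θ) (hfiint i), integral_const, (hidf i).integral_eq]
      simp [hEf]
    have e2 : ∀ i ∈ Finset.univ.filter (fun i : Fin (m + n) => m ≤ (i : ℕ)),
        (∫ ω, (θ - Y i ω) ∂μ) = 0 := by
      intro i _
      rw [integral_sub (integrable_const θ) (hYiint i), integral_const, (hidY i).integral_eq]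
      simp [hθ]
    rw [Finset.sum_congr rfl e1, Finset.sum_congr rfl e2, Finset.sum_const, Finset.sum_const,
      hcard1, hcard2, nsmul_eq_mul, smul_zero]
    ring
  refine ⟨key, fun hnm => ?_, fun hne => ?_⟩
  · rw [key, abs_mul, abs_of_nonneg (by positivity : (0:ℝ) ≤ 2 * (m : ℝ) / (m + n : ℝ))]
    have h1 : (1 : ℝ) ≤ 2 * (m : ℝ) / (m + n : ℝ) := by
      rw [le_div_iff₀ hmn]
      have : (n : ℝ) ≤ (m : ℝ) := by exact_mod_cast hnm
      linarith
    nlinarith [abs_nonneg (θ - Ef)]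
  · rw [key]
    exact mul_ne_zero (by positivity) (sub_ne_zero.mpr (Ne.symm hne))
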